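/- (Scott continuity of the loop characteristic functional.) Let Σ be a countable set, c : Σ → C(Σ), and b : Σ → Bool. Define Φ on functions f : Σ → C(Σ) by Φ(f)(σ) := f†(c(σ)) if b(σ) = true, and Φ(f)(σ) := η(σ) = ↑{δ_σ} if b(σ) = false, where f† is the Kleisli extension of f. Then Φ is Scott continuous with respect to the pointwise reverse-inclusion order (f ⊑ g iff g(σ) ⊆ f(σ) for all σ): for every nonempty family F of functions Σ → C(Σ) directed under ⊑, and every σ ∈ Σ, ∩_{f∈F} Φ(f)(σ) = Φ(τ ↦ ∩_{f∈F} f(τ))(σ). -/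

import Mathlib

open scoped Classical
open Filter Topology

namespace DOL

/-- A discrete probability distribution on `X`: pointwise nonnegative with total mass 1. -/
def IsDist {X : Type*} (μ : X → ℝ) : Prop := (∀ x, 0 ≤ μ x) ∧ HasSum μ 1

/-- The point-mass (Dirac) distribution at `x`. -/
noncomputable def dirac {X : Type*} (x : X) : X → ℝ := fun y => if y = x then 1 else 0

/-- The order `⊑_D` on distributions over `X_⊥ = Option X` (with `⊥ = none`):
pointwise comparison at proper states only. -/
def dle {X : Type*} (μ ν : Option X → ℝ) : Prop := ∀ x : X, μ (some x) ≤ ν (some x)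

/-- Up-closure of a set of distributions over `X_⊥` (within `D(X_⊥)`). -/
def upClo {X : Type*} (S : Set (Option X → ℝ)) : Set (Option X → ℝ) :=
  {ν | IsDist ν ∧ ∃ μ ∈ S, dle μ ν}

/-- Convexity of a set of functions, with pointwise convex combinations. -/
def IsConvexSet {X : Type*} (S : Set (X → ℝ)) : Prop :=
  ∀ μ ∈ S, ∀ ν ∈ S, ∀ p : ℝ, 0 ≤ p → p ≤ 1 →
    (fun x => p * μ x + (1 - p) * ν x) ∈ S

/-- Membership in `C(X)`: nonempty, consisting of distributions over `X_⊥`,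
convex, (topologically) closed, and up-closed. -/
def memC {X : Type*} (S : Set (Option X → ℝ)) : Prop :=
  S.Nonempty ∧ (∀ μ ∈ S, IsDist μ) ∧ IsConvexSet S ∧ IsClosed S ∧ upClo S = S

/-- Bottom-lifting of a set-valued map: `f_⊥(⊥) = ↑{δ_⊥}`. -/
noncomputable def fbot {X Y : Type*} (f : X → Set (Option Y → ℝ)) :
    Option X → Set (Option Y → ℝ) :=
  fun x => match x with
  | some x => f x
  | none => upClo {dirac (none : Option Y)}

/-- Kleisli extension: all convex mixtures `∑_{x ∈ supp μ} μ(x)·ν_x` with `μ ∈ S`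
and `ν_x ∈ f_⊥(x)` on the support of `μ`. -/
noncomputable def kleisli {X Y : Type*} (f : X → Set (Option Y → ℝ))
    (S : Set (Option X → ℝ)) : Set (Option Y → ℝ) :=
  {ξ | ∃ μ ∈ S, ∃ ν : Option X → (Option Y → ℝ),
    (∀ x, 0 < μ x → ν x ∈ fbot f x) ∧ (∀ y, ξ y = ∑' x, μ x * ν x y)}

/-- Probabilistic choice between sets of distributions. -/
def pchoice {X : Type*} (p : ℝ) (S T : Set (Option X → ℝ)) : Set (Option X → ℝ) :=
  {ξ | ∃ μ ∈ S, ∃ ν ∈ T, ξ = fun x => p * μ x + (1 - p) * ν x}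

/-- The monad unit `η(x) = ↑{δ_x}`. -/
noncomputable def eta {X : Type*} (x : X) : Set (Option X → ℝ) := upClo {dirac (some x)}

/-- The loop characteristic functional. -/
noncomputable def Phi {St : Type*} (c : St → Set (Option St → ℝ)) (b : St → Bool)
    (f : St → Set (Option St → ℝ)) : St → Set (Option St → ℝ) :=
  fun σ => if b σ then kleisli f (c σ) else upClo {dirac (some σ)}


section Helpers

variable {X : Type*}

lemma IsDist.nonneg' {μ : X → ℝ} (h : IsDist μ) (x : X) : 0 ≤ μ x := h.1 x

lemma IsDist.summable' {μ : X → ℝ} (h : IsDist μ) : Summable μ := h.2.summable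

lemma IsDist.tsum_eq' {μ : X → ℝ} (h : IsDist μ) : ∑' x, μ x = 1 := h.2.tsum_eq

lemma IsDist.le_one' {μ : X → ℝ} (h : IsDist μ) (x : X) : μ x ≤ 1 := by
  have := Summable.le_tsum h.summable' x (fun j _ => h.1 j)
  simpa [h.tsum_eq'] using this

lemma isDist_dirac (x : X) : IsDist (dirac x) := by
  constructor
  · intro y; unfold dirac; split <;> norm_num
  · exact hasSum_ite_eq x (1 : ℝ)

lemma hasSum_option' {f : Option X → ℝ} {a : ℝ} (h : HasSum (fun x => f (some x)) a) :
    HasSum f (f none + a) := by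
  have h1 : HasSum (fun o : Option X => if o = none then f none else 0) (f none) := by
    simpa using hasSum_ite_eq (none : Option X) (f none)
  have hz : ∀ o : Option X, o ∉ Set.range (some : X → Option X) →
      (if o = none then 0 else f o) = 0 := by
    intro o ho
    cases o with
    | none => simp
    | some x => exact absurd ⟨x, rfl⟩ ho
  have h2 : HasSum (fun o : Option X => if o = none then 0 else f o) a := by
    rw [← (Option.some_injective X).hasSum_iff hz]
    convert h using 1; funext x; simp
  have := h1.add h2
  convert this using 1
  funext o
  cases o <;> simp

lemma tsum_option' {f : Option X → ℝ} (hf : Summable f) :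
    ∑' o, f o = f none + ∑' x, f (some x) := by
  have hs : Summable fun x : X => f (some x) := hf.comp_injective (Option.some_injective X)
  exact (hasSum_option' hs.hasSum).tsum_eq

lemma hasSum_some {f : Option X → ℝ} (hf : IsDist f) :
    HasSum (fun y => f (some y)) (1 - f none) := by
  have hs : Summable fun x : X => f (some x) := hf.summable'.comp_injective (Option.some_injective X)
  refine hs.hasSum_iff.mpr ?_
  have := tsum_option' hf.summable'
  rw [hf.tsum_eq'] at this
  linarith

lemma tsum_some {f : Option X → ℝ} (hf : IsDist f) :
    ∑' y, f (some y) = 1 - f none := (hasSum_some hf).tsum_eq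

lemma term_nonneg {μ : Option X → ℝ} {ν : Option X → Option X → ℝ}
    (hμ : IsDist μ) (hν : ∀ x, 0 < μ x → IsDist (ν x)) (x y : Option X) :
    0 ≤ μ x * ν x y := by
  rcases (hμ.nonneg' x).lt_or_eq with h | h
  · exact mul_nonneg h.le ((hν x h).nonneg' y)
  · simp [← h]

lemma term_le {μ : Option X → ℝ} {ν : Option X → Option X → ℝ}
    (hμ : IsDist μ) (hν : ∀ x, 0 < μ x → IsDist (ν x)) (x y : Option X) :
    μ x * ν x y ≤ μ x := by
  rcases (hμ.nonneg' x).lt_or_eq with h | h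
  · exact mul_le_of_le_one_right h.le ((hν x h).le_one' y)
  · simp [← h]

lemma summable_mix {μ : Option X → ℝ} {ν : Option X → Option X → ℝ}
    (hμ : IsDist μ) (hν : ∀ x, 0 < μ x → IsDist (ν x)) (y : Option X) :
    Summable fun x => μ x * ν x y :=
  Summable.of_nonneg_of_le (term_nonneg hμ hν · y) (term_le hμ hν · y) hμ.summable'

lemma isDist_mix {μ : Option X → ℝ} {ν : Option X → Option X → ℝ}
    (hμ : IsDist μ) (hν : ∀ x, 0 < μ x → IsDist (ν x)) :
    IsDist (fun y => ∑' x, μ x * ν x y) := by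
  classical
  set ν' : Option X → Option X → ℝ := fun x => if h : 0 < μ x then ν x else dirac none with hν'def
  have hterm : ∀ x y, μ x * ν x y = μ x * ν' x y := by
    intro x y
    by_cases h : 0 < μ x
    · simp [ν', h]
    · have h0 : μ x = 0 := le_antisymm (not_lt.mp h) (hμ.nonneg' x)
      simp [h0]
  have hν'd : ∀ x, IsDist (ν' x) := by
    intro x
    by_cases h : 0 < μ x
    · simpa [ν', h] using hν x h
    · simpa [ν', h] using isDist_dirac (none : Option X)
  have hrw : (fun y => ∑' x, μ x * ν x y) = fun y => ∑' x, μ x * ν' x y := by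
    funext y; exact tsum_congr fun x => hterm x y
  rw [hrw]
  -- ENNReal computation
  set g : Option X → Option X → ENNReal := fun x y => ENNReal.ofReal (μ x * ν' x y) with hg
  have htermnn : ∀ x y, 0 ≤ μ x * ν' x y := fun x y =>
    mul_nonneg (hμ.nonneg' x) ((hν'd x).nonneg' y)
  have hrow : ∀ x, ∑' y, g x y = ENNReal.ofReal (μ x) := by
    intro x
    rw [← ENNReal.ofReal_tsum_of_nonneg (htermnn x) ((hν'd x).summable'.mul_left (μ x))]
    congr 1
    rw [tsum_mul_left, (hν'd x).tsum_eq', mul_one]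
  have hsummix : ∀ y, Summable fun x => μ x * ν' x y :=
    summable_mix hμ (fun x _ => hν'd x)
  have hcol : ∀ y, ∑' x, g x y = ENNReal.ofReal (∑' x, μ x * ν' x y) := by
    intro y
    rw [ENNReal.ofReal_tsum_of_nonneg (fun x => htermnn x y) (hsummix y)]
  have htot : ∑' y, ∑' x, g x y = 1 := by
    rw [ENNReal.tsum_comm]
    calc ∑' x, ∑' y, g x y = ∑' x, ENNReal.ofReal (μ x) := tsum_congr hrow
    _ = ENNReal.ofReal (∑' x, μ x) := (ENNReal.ofReal_tsum_of_nonneg hμ.nonneg' hμ.summable').symm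
    _ = 1 := by rw [hμ.tsum_eq', ENNReal.ofReal_one]
  have hcol_ne_top : ∀ y, ∑' x, g x y ≠ ⊤ := by
    intro y
    have hle : ∑' x, g x y ≤ ∑' (y' : Option X), ∑' x, g x y' :=
      ENNReal.le_tsum (f := fun y' => ∑' x, g x y') y
    exact ne_top_of_le_ne_top (htot ▸ ENNReal.one_ne_top) hle
  have hsumξ : Summable fun y => ∑' x, μ x * ν' x y := by
    have h1 : Summable fun y => (∑' x, g x y).toReal :=
      ENNReal.summable_toReal (by rw [htot]; exact ENNReal.one_ne_top)
    refine h1.congr fun y => ?_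
    rw [hcol y, ENNReal.toReal_ofReal (tsum_nonneg fun x => htermnn x y)]
  constructor
  · intro y; exact tsum_nonneg fun x => htermnn x y
  · refine hsumξ.hasSum_iff.mpr ?_
    have : ∑' y, ∑' x, μ x * ν' x y = (∑' y, ∑' x, g x y).toReal := by
      rw [ENNReal.tsum_toReal_eq hcol_ne_top]
      exact tsum_congr fun y => by
        rw [hcol y, ENNReal.toReal_ofReal (tsum_nonneg fun x => htermnn x y)]
    rw [this, htot, ENNReal.toReal_one]

end Helpers

/-- Key "repair" lemma: if `ξ''` is a kleisli mixture (with everywhere-defined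
distribution weights) that is dominated by the distribution `ξ` on proper states,
then `ξ` itself is in the Kleisli extension, using up-closedness of the targets. -/
lemma mem_kleisli_of_dle {X : Type*} {g : X → Set (Option X → ℝ)} {S : Set (Option X → ℝ)}
    (hg : ∀ x, upClo (g x) = g x)
    {μ : Option X → ℝ} (hμS : μ ∈ S) (hμ : IsDist μ)
    {ν : Option X → Option X → ℝ} (hνd : ∀ x, IsDist (ν x)) (hνm : ∀ x, ν x ∈ fbot g x)
    {ξ : Option X → ℝ} (hξ : IsDist ξ)
    (hle : ∀ y : X, ∑' x, μ x * ν x (some y) ≤ ξ (some y)) :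
    ξ ∈ kleisli g S := by
  classical
  set ξ'' : Option X → ℝ := fun y => ∑' x, μ x * ν x y with hξ''def
  have hξ''d : IsDist ξ'' := isDist_mix hμ (fun x _ => hνd x)
  set r : ℝ := ξ'' none with hrdef
  set d : X → ℝ := fun y => ξ (some y) - ξ'' (some y) with hddef
  have hd0 : ∀ y, 0 ≤ d y := fun y => sub_nonneg.mpr (hle y)
  have hSξ : Summable fun y : X => ξ (some y) :=
    hξ.summable'.comp_injective (Option.some_injective X)
  have hSξ'' : Summable fun y : X => ξ'' (some y) :=
    hξ''d.summable'.comp_injective (Option.some_injective X)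
  have hSd : Summable d := by simpa [hddef] using hSξ.sub hSξ''
  set D : ℝ := ∑' y, d y with hDdef
  have hD0 : 0 ≤ D := tsum_nonneg hd0
  have hDeq : D = r - ξ none := by
    have h1 : ∑' y, (ξ (some y) - ξ'' (some y)) =
        (∑' y : X, ξ (some y)) - ∑' y : X, ξ'' (some y) := Summable.tsum_sub hSξ hSξ''
    simp only [hDdef, hddef]
    rw [h1, tsum_some hξ, tsum_some hξ''d, hrdef]
    ring
  have hξnone : ξ none = r - D := by rw [hDeq]; ring
  have hr0 : 0 ≤ r := hξ''d.nonneg' none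
  have hDr : D ≤ r := by have h := hξ.nonneg' none; linarith [hξnone]
  by_cases hr : r = 0
  · -- degenerate case: ξ = ξ''
    have hD : D = 0 := le_antisymm (by rw [hDeq, hr]; linarith [hξ.nonneg' none]) hD0
    have hdy : ∀ y, d y = 0 := by
      intro y
      have h1 : d y ≤ D := Summable.le_tsum hSd y fun j _ => hd0 j
      exact le_antisymm (by linarith [hD]) (hd0 y)
    refine ⟨μ, hμS, ν, fun x _ => hνm x, ?_⟩
    intro y
    cases y with
    | none =>
        have h2 : ξ'' none = 0 := by rw [← hrdef, hr]
        simp only [hξ''def] at h2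
        rw [hξnone, hr, hD, h2]
        ring
    | some y =>
        have h3 := hdy y
        simp only [hddef, hξ''def] at h3
        linarith
  · have hrpos : 0 < r := lt_of_le_of_ne hr0 (Ne.symm hr)
    -- repaired weights
    set νh : Option X → Option X → ℝ := fun x o =>
      Option.casesOn o (ν x none * (1 - D / r)) (fun y => ν x (some y) + ν x none / r * d y)
      with hνhdef
    have hνhsome : ∀ x y, νh x (some y) = ν x (some y) + ν x none / r * d y := fun _ _ => rfl
    have hνhnone : ∀ x, νh x none = ν x none * (1 - D / r) := fun _ => rfl
    have hνhnn : ∀ x o, 0 ≤ νh x o := by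
      intro x o
      cases o with
      | none =>
          rw [hνhnone]
          refine mul_nonneg ((hνd x).nonneg' none) ?_
          rw [sub_nonneg, div_le_one hrpos]; exact hDr
      | some y =>
          rw [hνhsome]
          exact add_nonneg ((hνd x).nonneg' _)
            (mul_nonneg (div_nonneg ((hνd x).nonneg' none) hr0) (hd0 y))
    have hνhdist : ∀ x, IsDist (νh x) := by
      intro x
      refine ⟨hνhnn x, ?_⟩
      have h1 : HasSum (fun y : X => ν x (some y)) (1 - ν x none) := hasSum_some (hνd x)
      have h2 : HasSum (fun y : X => ν x none / r * d y) (ν x none / r * D) :=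
        hSd.hasSum.mul_left _
      have h3 : HasSum (fun y : X => νh x (some y))
          ((1 - ν x none) + ν x none / r * D) := by
        simpa [hνhsome] using h1.add h2
      have h4 := hasSum_option' h3
      have : νh x none + ((1 - ν x none) + ν x none / r * D) = 1 := by
        rw [hνhnone]; field_simp; ring
      rwa [this] at h4
    have hνhdle : ∀ x, dle (ν x) (νh x) := by
      intro x y
      rw [hνhsome]
      have : 0 ≤ ν x none / r * d y :=
        mul_nonneg (div_nonneg ((hνd x).nonneg' none) hr0) (hd0 y)
      linarith
    have hνhmem : ∀ x, νh x ∈ fbot g x := by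
      intro x
      cases x with
      | some x₀ =>
          have hmem0 : ν (some x₀) ∈ g x₀ := hνm (some x₀)
          have h5 : νh (some x₀) ∈ upClo (g x₀) :=
            ⟨hνhdist _, ν (some x₀), hmem0, hνhdle _⟩
          rw [hg x₀] at h5
          exact h5
      | none =>
          show νh none ∈ upClo {dirac none}
          refine ⟨hνhdist _, dirac none, Set.mem_singleton _, ?_⟩
          intro y
          have hz : dirac (none : Option X) (some y) = 0 := by simp [dirac]
          rw [hz]
          exact hνhnn none (some y)
    refine ⟨μ, hμS, νh, fun x _ => hνhmem x, ?_⟩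
    intro y
    have hsum1 : ∀ o, Summable fun x => μ x * ν x o := summable_mix hμ (fun x _ => hνd x)
    cases y with
    | none =>
        have hterm : ∀ x, μ x * νh x none = (μ x * ν x none) * (1 - D / r) := by
          intro x; rw [hνhnone]; ring
        calc ξ none = r - D := hξnone
        _ = r * (1 - D / r) := by field_simp
        _ = (∑' x, μ x * ν x none) * (1 - D / r) := by simp only [hrdef, hξ''def]
        _ = ∑' x, (μ x * ν x none) * (1 - D / r) := (tsum_mul_right).symm
        _ = ∑' x, μ x * νh x none := tsum_congr fun x => (hterm x).symm
    | some y₀ =>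
        have hterm : ∀ x, μ x * νh x (some y₀) =
            μ x * ν x (some y₀) + (μ x * ν x none) * (d y₀ / r) := by
          intro x; rw [hνhsome]; ring
        have hs2 : Summable fun x => (μ x * ν x none) * (d y₀ / r) :=
          (hsum1 none).mul_right _
        calc ξ (some y₀) = ξ'' (some y₀) + d y₀ := by simp only [hddef]; ring
        _ = ξ'' (some y₀) + r * (d y₀ / r) := by
            have hcc : r * (d y₀ / r) = d y₀ := by field_simp
            rw [hcc]
        _ = (∑' x, μ x * ν x (some y₀)) + (∑' x, μ x * ν x none) * (d y₀ / r) := by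
            simp only [hrdef, hξ''def]
        _ = ∑' x, (μ x * ν x (some y₀) + (μ x * ν x none) * (d y₀ / r)) := by
            rw [Summable.tsum_add (hsum1 _) hs2, tsum_mul_right]
        _ = ∑' x, μ x * νh x (some y₀) := tsum_congr fun x => (hterm x).symm

/-- Elements of `fbot f x` are distributions whenever elements of each `f x` are. -/
lemma isDist_of_mem_fbot {X : Type*} {f : X → Set (Option X → ℝ)}
    (hf : ∀ x, ∀ ρ ∈ f x, IsDist ρ) :
    ∀ x, ∀ ρ ∈ fbot f x, IsDist ρ := by
  intro x ρ hρ
  cases x with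
  | some x₀ => exact hf x₀ ρ hρ
  | none => exact hρ.1

/-- Scott continuity of the loop characteristic functional:
for a directed family `F` (pointwise reverse inclusion),
`⋂_{f∈F} Φ(f)(σ) = Φ(τ ↦ ⋂_{f∈F} f(τ))(σ)`. -/
theorem Phi_scott_continuous {St : Type*} [Countable St]
    (c : St → Set (Option St → ℝ)) (hc : ∀ σ, memC (c σ)) (b : St → Bool)
    (F : Set (St → Set (Option St → ℝ))) (hne : F.Nonempty)
    (hmem : ∀ f ∈ F, ∀ σ, memC (f σ))
    (hdir : ∀ f ∈ F, ∀ g ∈ F, ∃ h ∈ F, (∀ σ, h σ ⊆ f σ) ∧ (∀ σ, h σ ⊆ g σ))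
    (σ : St) :
    (⋂ f ∈ F, Phi c b f σ) = Phi c b (fun τ => ⋂ f ∈ F, f τ) σ := by
  classical
  obtain ⟨f₀, hf₀⟩ := hne
  by_cases hb : b σ = true
  swap
  · have hb' : b σ = false := by simpa using hb
    simp only [Phi, hb', Bool.false_eq_true, if_false]
    exact Set.biInter_const ⟨f₀, hf₀⟩ _
  simp only [Phi, hb, if_true]
  -- g is the pointwise intersection
  set g : St → Set (Option St → ℝ) := fun τ => ⋂ f ∈ F, f τ with hgdef
  -- `g τ` is up-closed
  have hgup : ∀ x, upClo (g x) = g x := by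
    intro x
    ext ρ
    constructor
    · rintro ⟨hρd, μ, hμ, hleρ⟩
      simp only [hgdef, Set.mem_iInter] at hμ ⊢
      intro f hf
      have : ρ ∈ upClo (f x) := ⟨hρd, μ, hμ f hf, hleρ⟩
      rwa [(hmem f hf x).2.2.2.2] at this
    · intro hρ
      have hρf : ρ ∈ f₀ x := by
        simp only [hgdef, Set.mem_iInter] at hρ; exact hρ f₀ hf₀
      exact ⟨(hmem f₀ hf₀ x).2.1 ρ hρf, ρ, hρ, fun _ => le_refl _⟩
  ext ξ
  constructor
  · intro hξmem
    have hξk : ∀ f ∈ F, ξ ∈ kleisli f (c σ) := by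
      intro f hf
      exact Set.mem_iInter₂.mp hξmem f hf
    -- ξ is a distribution
    obtain ⟨μ₀, hμ₀, ν₀, hν₀, hξeq⟩ := hξk f₀ hf₀
    have hμ₀d : IsDist μ₀ := (hc σ).2.1 μ₀ hμ₀
    have hν₀d : ∀ x, 0 < μ₀ x → IsDist (ν₀ x) := fun x hx =>
      isDist_of_mem_fbot (fun x₀ => (hmem f₀ hf₀ x₀).2.1) x (ν₀ x) (hν₀ x hx)
    have hξd : IsDist ξ := by
      have h1 := isDist_mix hμ₀d hν₀d
      have h2 : ξ = fun y => ∑' x, μ₀ x * ν₀ x y := funext hξeq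
      rw [h2]; exact h1
    -- the compactness setup
    let T := (Option St → ℝ) × (Option St → Option St → ℝ)
    set W : (St → Set (Option St → ℝ)) → Set T := fun f =>
      {p | p.1 ∈ c σ ∧ (∀ x : St, p.2 (some x) ∈ f x) ∧ p.2 none = dirac none ∧
        ∀ (s : Finset (Option St)) (y : St),
          ∑ x ∈ s, p.1 x * p.2 x (some y) ≤ ξ (some y)} with hWdef
    set Q : Set T := (Set.univ.pi fun _ : Option St => Set.Icc (0:ℝ) 1) ×ˢ
        (Set.univ.pi fun _ : Option St => Set.univ.pi fun _ : Option St => Set.Icc (0:ℝ) 1)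
      with hQdef
    have hQcomp : IsCompact Q :=
      (isCompact_univ_pi fun _ => isCompact_Icc).prod
        (isCompact_univ_pi fun _ => isCompact_univ_pi fun _ => isCompact_Icc)
    -- second components of members of W f are distributions
    have hWdist : ∀ f ∈ F, ∀ p ∈ W f, (IsDist p.1 ∧ ∀ x, IsDist (p.2 x)) := by
      intro f hf p hp
      obtain ⟨hp1, hp2, hp3, _⟩ := hp
      refine ⟨(hc σ).2.1 _ hp1, ?_⟩
      intro x
      cases x with
      | some x₀ => exact (hmem f hf x₀).2.1 _ (hp2 x₀)
      | none => rw [hp3]; exact isDist_dirac none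
    have hWsub : ∀ f ∈ F, W f ⊆ Q := by
      intro f hf p hp
      obtain ⟨hpd1, hpd2⟩ := hWdist f hf p hp
      constructor
      · intro x _
        exact ⟨hpd1.nonneg' x, hpd1.le_one' x⟩
      · intro x _
        intro y _
        exact ⟨(hpd2 x).nonneg' y, (hpd2 x).le_one' y⟩
    have hWclosed : ∀ f ∈ F, IsClosed (W f) := by
      intro f hf
      have heq : W f = ({p : T | p.1 ∈ c σ} ∩
          ((⋂ x : St, {p : T | p.2 (some x) ∈ f x}) ∩
          ({p : T | p.2 none = dirac none} ∩
          ⋂ s : Finset (Option St), ⋂ y : St,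
            {p : T | ∑ x ∈ s, p.1 x * p.2 x (some y) ≤ ξ (some y)}))) := by
        ext p
        simp only [hWdef, Set.mem_setOf_eq, Set.mem_inter_iff, Set.mem_iInter]
      rw [heq]
      refine IsClosed.inter ?_ (IsClosed.inter ?_ (IsClosed.inter ?_ ?_))
      · exact (hc σ).2.2.2.1.preimage continuous_fst
      · exact isClosed_iInter fun x =>
          (hmem f hf x).2.2.2.1.preimage ((continuous_apply (some x)).comp continuous_snd)
      · exact isClosed_eq ((continuous_apply none).comp continuous_snd) continuous_const
      · refine isClosed_iInter fun s => isClosed_iInter fun y => ?_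
        refine isClosed_le ?_ continuous_const
        refine continuous_finset_sum s fun x _ => ?_
        exact ((continuous_apply x).comp continuous_fst).mul
          (((continuous_apply (some y)).comp ((continuous_apply x).comp continuous_snd)))
    have hWne : ∀ f ∈ F, (W f).Nonempty := by
      intro f hf
      obtain ⟨μ, hμ, ν, hνs, heq⟩ := hξk f hf
      have hμd : IsDist μ := (hc σ).2.1 μ hμ
      have hνd : ∀ x, 0 < μ x → IsDist (ν x) := fun x hx =>
        isDist_of_mem_fbot (fun x₀ => (hmem f hf x₀).2.1) x (ν x) (hνs x hx)
      set ν' : Option St → (Option St → ℝ) := fun x =>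
        Option.casesOn x (dirac none)
          (fun x₀ => if h : 0 < μ (some x₀) then ν (some x₀) else (hmem f hf x₀).1.some)
        with hν'def
      refine ⟨(μ, ν'), hμ, ?_, rfl, ?_⟩
      · intro x
        show ν' (some x) ∈ f x
        by_cases h : 0 < μ (some x)
        · have : ν' (some x) = ν (some x) := by simp [hν'def, h]
          rw [this]
          exact hνs (some x) h
        · have : ν' (some x) = (hmem f hf x).1.some := by simp [hν'def, h]
          rw [this]
          exact (hmem f hf x).1.some_mem
      · intro s y
        show ∑ x ∈ s, μ x * ν' x (some y) ≤ ξ (some y)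
        -- termwise: μ x * ν' x (some y) ≤ μ x * ν x (some y)
        have hterm : ∀ x, μ x * ν' x (some y) ≤ μ x * ν x (some y) := by
          intro x
          rcases (hμd.nonneg' x).lt_or_eq with h | h
          · cases x with
            | none =>
                have h1 : ν' none (some y) = 0 := by simp [hν'def, dirac]
                rw [h1, mul_zero]
                exact mul_nonneg h.le ((hνd none h).nonneg' _)
            | some x₀ =>
                have h1 : ν' (some x₀) = ν (some x₀) := by simp [hν'def, h]
                rw [h1]
          · simp [← h]
        have hν'd : ∀ x, 0 < μ x → IsDist (ν' x) := by
          intro x hx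
          cases x with
          | none => exact isDist_dirac none
          | some x₀ =>
              have h1 : ν' (some x₀) = ν (some x₀) := by simp [hν'def, hx]
              rw [h1]; exact hνd _ hx
        calc ∑ x ∈ s, μ x * ν' x (some y) ≤ ∑ x ∈ s, μ x * ν x (some y) :=
              Finset.sum_le_sum fun x _ => hterm x
        _ ≤ ∑' x, μ x * ν x (some y) :=
              Summable.sum_le_tsum s (fun x _ => term_nonneg hμd hνd x _) (summable_mix hμd hνd _)
        _ = ξ (some y) := (heq (some y)).symm
    -- directedness
    have : Nonempty F := ⟨⟨f₀, hf₀⟩⟩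
    have hWdirected : Directed (· ⊇ ·) (fun i : F => W i.1) := by
      intro i j
      obtain ⟨h, hh, hhf, hhg⟩ := hdir i.1 i.2 j.1 j.2
      refine ⟨⟨h, hh⟩, ?_, ?_⟩
      · rintro p ⟨hp1, hp2, hp3, hp4⟩
        exact ⟨hp1, fun x => hhf x (hp2 x), hp3, hp4⟩
      · rintro p ⟨hp1, hp2, hp3, hp4⟩
        exact ⟨hp1, fun x => hhg x (hp2 x), hp3, hp4⟩
    obtain ⟨p, hp⟩ :=
      IsCompact.nonempty_iInter_of_directed_nonempty_isCompact_isClosed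
        (fun i : F => W i.1) hWdirected (fun i => hWne i.1 i.2)
        (fun i => hQcomp.of_isClosed_subset (hWclosed i.1 i.2) (hWsub i.1 i.2))
        (fun i => hWclosed i.1 i.2)
    rw [Set.mem_iInter] at hp
    have hp1 : p.1 ∈ c σ := (hp ⟨f₀, hf₀⟩).1
    have hp2 : ∀ f ∈ F, ∀ x : St, p.2 (some x) ∈ f x := fun f hf => (hp ⟨f, hf⟩).2.1
    have hp3 : p.2 none = dirac none := (hp ⟨f₀, hf₀⟩).2.2.1
    have hp4 : ∀ (s : Finset (Option St)) (y : St),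
        ∑ x ∈ s, p.1 x * p.2 x (some y) ≤ ξ (some y) := (hp ⟨f₀, hf₀⟩).2.2.2
    have hμd : IsDist p.1 := (hc σ).2.1 _ hp1
    have hνd : ∀ x, IsDist (p.2 x) := (hWdist f₀ hf₀ p (hp ⟨f₀, hf₀⟩)).2
    have hνm : ∀ x, p.2 x ∈ fbot g x := by
      intro x
      cases x with
      | some x₀ =>
          show p.2 (some x₀) ∈ g x₀
          simp only [hgdef, Set.mem_iInter]
          intro f hf
          exact hp2 f hf x₀
      | none =>
          show p.2 none ∈ upClo {dirac none}
          rw [hp3]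
          exact ⟨isDist_dirac none, dirac none, Set.mem_singleton _, fun _ => le_refl _⟩
    have hle : ∀ y : St, ∑' x, p.1 x * p.2 x (some y) ≤ ξ (some y) := by
      intro y
      exact Summable.tsum_le_of_sum_le (summable_mix hμd (fun x _ => hνd x) _) fun s => hp4 s y
    exact mem_kleisli_of_dle hgup hp1 hμd hνd hνm hξd hle
  · intro hξmem
    apply Set.mem_iInter₂.mpr
    intro f hf
    obtain ⟨μ, hμ, ν, hνs, heq⟩ := hξmem
    refine ⟨μ, hμ, ν, ?_, heq⟩
    intro x hx
    cases x with
    | some x₀ =>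
        have h1 : ν (some x₀) ∈ g x₀ := hνs (some x₀) hx
        simp only [hgdef, Set.mem_iInter] at h1
        exact h1 f hf
    | none => exact hνs none hx

end DOL
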